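/- Let T = N(5) ⊆ ℚ₂^× ∪ {0} with O₁(T) = {x : x ∉ T, 1+x ∈ T} (together with 0). Then O₁(T) consists exactly of the 2-adic numbers with positive odd valuation (and 0), O₂(T) consists of the 2-adic integers with even valuation, and O(T) = O₁(T) ∪ O₂(T) = ℤ₂. -/

import Mathlib

-- basic helpers over ℚ_[2]
lemma val_inj {x y : ℚ_[2]} (hx : x ≠ 0) (hy : y ≠ 0) (h : ‖x‖ = ‖y‖) :
    x.valuation = y.valuation := by
  rw [Padic.norm_eq_zpow_neg_valuation hx, Padic.norm_eq_zpow_neg_valuation hy] at h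
  have h2 : (1:ℝ) < (2:ℕ) := by norm_num
  have := (zpow_right_injective₀ (by norm_num : (0:ℝ) < (2:ℕ)) (by norm_num)) h
  omega

lemma norm_lt_of_val_lt {x y : ℚ_[2]} (hx : x ≠ 0) (hy : y ≠ 0)
    (h : x.valuation < y.valuation) : ‖y‖ < ‖x‖ := by
  rw [Padic.norm_eq_zpow_neg_valuation hx, Padic.norm_eq_zpow_neg_valuation hy]
  apply zpow_lt_zpow_right₀ (by norm_num : (1:ℝ) < (2:ℕ))
  omega

lemma val_add_of_lt {x y : ℚ_[2]} (hx : x ≠ 0) (hy : y ≠ 0)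
    (h : x.valuation < y.valuation) :
    x + y ≠ 0 ∧ (x + y).valuation = x.valuation := by
  have hlt := norm_lt_of_val_lt hx hy h
  have hne : ‖x‖ ≠ ‖y‖ := (ne_of_lt hlt).symm
  have hmax : ‖x + y‖ = max ‖x‖ ‖y‖ := Padic.add_eq_max_of_ne hne
  have hxy : ‖x + y‖ = ‖x‖ := by rw [hmax, max_eq_left hlt.le]
  have hne0 : x + y ≠ 0 := by
    intro h0
    rw [h0, norm_zero] at hxy
    exact hx (norm_eq_zero.mp hxy.symm)
  exact ⟨hne0, val_inj hne0 hx hxy⟩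

lemma two_dvd_or_sub_one (z : ℤ_[2]) : (2:ℤ_[2]) ∣ z ∨ (2:ℤ_[2]) ∣ z - 1 := by
  have key : ∀ w : ℤ_[2], PadicInt.toZMod w = 0 → (2:ℤ_[2]) ∣ w := by
    intro w hw
    have : w ∈ RingHom.ker (PadicInt.toZMod : ℤ_[2] →+* ZMod 2) := hw
    rw [PadicInt.ker_toZMod, PadicInt.maximalIdeal_eq_span_p,
      Ideal.mem_span_singleton] at this
    exact_mod_cast this
  rcases (by decide : ∀ a : ZMod 2, a = 0 ∨ a = 1) (PadicInt.toZMod z) with h | h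
  · exact Or.inl (key z h)
  · refine Or.inr (key _ ?_)
    rw [map_sub, h, map_one, sub_self]

lemma isUnit_iff_not_dvd (z : ℤ_[2]) : IsUnit z ↔ ¬ (2:ℤ_[2]) ∣ z := by
  rw [PadicInt.isUnit_iff]
  constructor
  · intro h hd
    have := (PadicInt.norm_lt_one_iff_dvd z).mpr hd
    rw [h] at this; exact lt_irrefl 1 this
  · intro h
    have h1 := PadicInt.norm_le_one z
    have h2 : ¬ ‖z‖ < 1 := fun hl => h ((PadicInt.norm_lt_one_iff_dvd z).mp hl)
    linarith [lt_or_eq_of_le h1]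

lemma eight_dvd_sq_sub_one {r : ℤ_[2]} (hr : IsUnit r) : (8:ℤ_[2]) ∣ r ^ 2 - 1 := by
  have h1 : (2:ℤ_[2]) ∣ r - 1 := by
    rcases two_dvd_or_sub_one r with h | h
    · exact absurd hr (by rw [isUnit_iff_not_dvd]; simp [h])
    · exact h
  obtain ⟨t, ht⟩ := h1
  have hr1 : r = 1 + 2 * t := by linear_combination ht
  have h2 : (2:ℤ_[2]) ∣ t * (t + 1) := by
    rcases two_dvd_or_sub_one t with ⟨s, hs⟩ | ⟨s, hs⟩
    · exact ⟨s * (t+1), by rw [hs]; ring⟩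
    · exact ⟨t * s + t, by linear_combination t * hs⟩
  obtain ⟨s, hs⟩ := h2
  exact ⟨s, by rw [hr1]; linear_combination (4:ℤ_[2]) * hs⟩

lemma exists_sqrt {w : ℤ_[2]} (h : (8:ℤ_[2]) ∣ w - 1) : ∃ s : ℤ_[2], s ^ 2 = w := by
  have hp : Fact (Nat.Prime 2) := ⟨Nat.prime_two⟩
  set F : Polynomial ℤ_[2] := Polynomial.X ^ 2 - Polynomial.C w with hF
  have heval : F.eval 1 = 1 - w := by simp [hF]
  have hderiv : F.derivative.eval 1 = 2 := by
    simp [hF, Polynomial.derivative_X_pow]; norm_num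
  have hnorm2 : ‖(2:ℤ_[2])‖ = (2:ℝ)⁻¹ := by
    have h2 : ((2:ℕ) : ℤ_[2]) = (2:ℤ_[2]) := by norm_num
    rw [← h2, PadicInt.norm_p]; norm_num
  have hnorm8 : ‖(8:ℤ_[2])‖ = (8:ℝ)⁻¹ := by
    have : (8:ℤ_[2]) = (2:ℤ_[2]) ^ 3 := by norm_num
    rw [this, norm_pow, hnorm2]
    norm_num
  have hlt : ‖F.eval 1‖ < ‖F.derivative.eval 1‖ ^ 2 := by
    rw [heval, hderiv]
    obtain ⟨t, ht⟩ := h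
    have : ‖(1:ℤ_[2]) - w‖ ≤ (8:ℝ)⁻¹ := by
      have : (1:ℤ_[2]) - w = -(8 * t) := by linear_combination -ht
      rw [this, norm_neg, norm_mul, hnorm8]
      calc (8:ℝ)⁻¹ * ‖t‖ ≤ 8⁻¹ * 1 := by
            apply mul_le_mul_of_nonneg_left (PadicInt.norm_le_one t) (by norm_num)
        _ = 8⁻¹ := by norm_num
    calc ‖(1:ℤ_[2]) - w‖ ≤ (8:ℝ)⁻¹ := this
      _ < ‖(2:ℤ_[2])‖ ^ 2 := by rw [hnorm2]; norm_num
  obtain ⟨z, hz, -⟩ := hensels_lemma hlt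
  refine ⟨z, ?_⟩
  have : z ^ 2 - w = 0 := by simpa [hF] using hz
  linear_combination this

lemma mod8_cases {w : ℤ_[2]} (hw : IsUnit w) :
    ∃ c : ℤ, (c = 1 ∨ c = 11 ∨ c = -19 ∨ c = -1) ∧ (8:ℤ_[2]) ∣ w - (c:ℤ_[2]) := by
  have key : ∀ (c : ℤ), PadicInt.toZModPow 3 (w - (c:ℤ_[2])) = 0 → (8:ℤ_[2]) ∣ w - (c:ℤ_[2]) := by
    intro c hc
    have : w - (c:ℤ_[2]) ∈ RingHom.ker (PadicInt.toZModPow 3 : ℤ_[2] →+* ZMod (2^3)) := hc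
    rw [PadicInt.ker_toZModPow, Ideal.mem_span_singleton] at this
    have h8 : (((2:ℕ):ℤ_[2]))^3 = (8:ℤ_[2]) := by push_cast; norm_num
    rwa [h8] at this
  have hu : IsUnit (PadicInt.toZModPow 3 w) := hw.map _
  have : ∀ a : ZMod (2^3), IsUnit a → a = 1 ∨ a = 3 ∨ a = 5 ∨ a = 7 := by decide
  rcases this _ hu with h | h | h | h
  · exact ⟨1, Or.inl rfl, key 1 (by rw [map_sub, h, map_intCast]; decide)⟩
  · refine ⟨11, Or.inr (Or.inl rfl), key 11 ?_⟩
    rw [map_sub, h, map_intCast]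
    decide
  · refine ⟨-19, Or.inr (Or.inr (Or.inl rfl)), key (-19) ?_⟩
    rw [map_sub, h, map_intCast]
    decide
  · refine ⟨-1, Or.inr (Or.inr (Or.inr rfl)), key (-1) ?_⟩
    rw [map_sub, h, map_intCast]
    decide

-- assume previous lemmas; test smaller pieces
lemma val_neg (y : ℚ_[2]) : (-y).valuation = y.valuation := by
  by_cases hy : y = 0
  · simp [hy]
  · have : ‖-y‖ = ‖y‖ := norm_neg y
    rw [Padic.norm_eq_zpow_neg_valuation (neg_ne_zero.mpr hy), Padic.norm_eq_zpow_neg_valuation hy] at this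
    have := (zpow_right_injective₀ (by norm_num : (0:ℝ) < (2:ℕ)) (by norm_num)) this
    omega

lemma val_five : (5:ℚ_[2]).valuation = 0 := by
  rw [Padic.valuation_ofNat]
  simp [padicValNat.eq_zero_of_not_dvd]

lemma val_four : (4:ℚ_[2]).valuation = 2 := by
  have h4 : (4:ℚ_[2]) = 2 * 2 := by norm_num
  have h2 : (2:ℚ_[2]).valuation = 1 := by
    have := @Padic.valuation_p 2 ⟨Nat.prime_two⟩
    simpa using this
  rw [h4, Padic.valuation_mul (by norm_num) (by norm_num), h2]; norm_num

lemma val_coe_unit {m : ℤ_[2]} (h : IsUnit m) :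
    ((m:ℚ_[2]) ≠ 0) ∧ (m:ℚ_[2]).valuation = 0 := by
  have hn : ‖(m:ℚ_[2])‖ = 1 := by rw [PadicInt.padic_norm_e_of_padicInt, PadicInt.isUnit_iff.mp h]
  have hne : (m:ℚ_[2]) ≠ 0 := fun h0 => by simp [h0] at hn
  refine ⟨hne, ?_⟩
  rw [Padic.norm_eq_zpow_neg_valuation hne] at hn
  have : ((2:ℕ):ℝ) ^ (-(m:ℚ_[2]).valuation) = ((2:ℕ):ℝ) ^ (0:ℤ) := by rw [hn]; norm_num
  have := (zpow_right_injective₀ (by norm_num : (0:ℝ) < (2:ℕ)) (by norm_num)) this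
  omega

lemma val_two_zpow (k : ℤ) : ((2:ℚ_[2]) ^ k).valuation = k := by
  have h2 : ‖(2:ℚ_[2])‖ = (2:ℝ)⁻¹ := by
    have : ((2:ℕ):ℚ_[2]) = (2:ℚ_[2]) := by norm_num
    rw [← this, Padic.norm_p]; norm_num
  have hne : (2:ℚ_[2]) ^ k ≠ 0 := zpow_ne_zero k (by norm_num)
  have : ‖(2:ℚ_[2]) ^ k‖ = (2:ℝ) ^ (-k) := by
    rw [norm_zpow, h2, inv_zpow, ← zpow_neg]
  rw [Padic.norm_eq_zpow_neg_valuation hne] at this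
  have : ((2:ℕ):ℝ) ^ (-((2:ℚ_[2])^k).valuation) = ((2:ℕ):ℝ) ^ (-k) := by
    rw [this]; norm_num
  have := (zpow_right_injective₀ (by norm_num : (0:ℝ) < (2:ℕ)) (by norm_num)) this
  omega

lemma even_val_of_rep {x u v : ℚ_[2]} (hx : x ≠ 0) (h : x = u ^ 2 - 5 * v ^ 2) :
    Even x.valuation := by
  have h5ne : (5:ℚ_[2]) ≠ 0 := by norm_num
  by_cases hv : v = 0
  · have hxu : x = u * u := by rw [h, hv]; ring
    have hu : u ≠ 0 := fun h0 => hx (by rw [hxu, h0, mul_zero])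
    rw [hxu, Padic.valuation_mul hu hu]
    exact ⟨u.valuation, rfl⟩
  · have h5v : (5:ℚ_[2]) * v ^ 2 ≠ 0 := by
      apply mul_ne_zero h5ne (pow_ne_zero 2 hv)
    have hval5v : ((5:ℚ_[2]) * v ^ 2).valuation = v.valuation + v.valuation := by
      have hv2 : v ^ 2 = v * v := sq v
      rw [hv2, Padic.valuation_mul h5ne (mul_ne_zero hv hv),
        Padic.valuation_mul hv hv, val_five, zero_add]
    by_cases hu : u = 0
    · have hxv : x = -(5 * v ^ 2) := by rw [h, hu]; ring
      rw [hxv, val_neg, hval5v]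
      exact ⟨v.valuation, rfl⟩
    · have hu2 : u ^ 2 ≠ 0 := pow_ne_zero 2 hu
      have hvalu2 : (u ^ 2).valuation = u.valuation + u.valuation := by
        rw [sq u, Padic.valuation_mul hu hu]
      rcases lt_trichotomy u.valuation v.valuation with hlt | heq | hgt
      · -- x = u^2 + (-(5 v^2)), val u^2 < val (5v^2)
        have hx' : x = u ^ 2 + -(5 * v ^ 2) := by rw [h]; ring
        have hcmp : (u ^ 2).valuation < (-(5 * v ^ 2)).valuation := by
          rw [hvalu2, val_neg, hval5v]; omega
        have := val_add_of_lt hu2 (neg_ne_zero.mpr h5v) hcmp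
        rw [hx', this.2, hvalu2]
        exact ⟨u.valuation, rfl⟩
      · -- equal valuations: r = u / v is a unit
        set r : ℚ_[2] := u / v with hr
        have hrne : r ≠ 0 := div_ne_zero hu hv
        have hu_eq : u = r * v := by rw [hr, div_mul_cancel₀ u hv]
        have hvr : r.valuation = 0 := by
          have := Padic.valuation_mul hrne hv
          rw [← hu_eq] at this
          omega
        have hrnorm : ‖r‖ = 1 := by
          rw [Padic.norm_eq_zpow_neg_valuation hrne, hvr]; norm_num
        set r' : ℤ_[2] := ⟨r, le_of_eq hrnorm⟩ with hr'
        have hr'unit : IsUnit r' := PadicInt.isUnit_iff.mpr hrnorm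
        obtain ⟨t, ht⟩ := eight_dvd_sq_sub_one hr'unit
        set m : ℤ_[2] := 2 * t - 1 with hm
        have hmeq : r' ^ 2 - 5 = 4 * m := by rw [hm]; linear_combination ht
        have hmunit : IsUnit m := by
          rw [isUnit_iff_not_dvd]
          rintro ⟨k, hk⟩
          have : (2:ℤ_[2]) * (t - k) = 1 := by rw [hm] at hk; linear_combination hk
          have h2u : IsUnit (2:ℤ_[2]) := IsUnit.of_mul_eq_one _ this
          rw [isUnit_iff_not_dvd] at h2u
          exact h2u dvd_rfl
        obtain ⟨hmne, hmval⟩ := val_coe_unit hmunit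
        have hcoe : r ^ 2 - 5 = 4 * (m : ℚ_[2]) := by
          have := congrArg (fun z : ℤ_[2] => (z : ℚ_[2])) hmeq
          push_cast at this
          exact this
        have hx' : x = v ^ 2 * (4 * (m : ℚ_[2])) := by
          rw [h, ← hcoe, hu_eq]; ring
        have h4m : (4:ℚ_[2]) * (m:ℚ_[2]) ≠ 0 := mul_ne_zero (by norm_num) hmne
        have hval4m : ((4:ℚ_[2]) * (m:ℚ_[2])).valuation = 2 := by
          rw [Padic.valuation_mul (by norm_num) hmne, val_four, hmval]; norm_num
        have hv2 : (v:ℚ_[2]) ^ 2 ≠ 0 := pow_ne_zero 2 hv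
        have hvalv2 : (v ^ 2).valuation = v.valuation + v.valuation := by
          rw [sq v, Padic.valuation_mul hv hv]
        rw [hx', Padic.valuation_mul hv2 h4m, hvalv2, hval4m]
        exact ⟨v.valuation + 1, by ring⟩
      · have hx' : x = -(5 * v ^ 2) + u ^ 2 := by rw [h]; ring
        have hcmp : (-(5 * v ^ 2)).valuation < (u ^ 2).valuation := by
          rw [hvalu2, val_neg, hval5v]; omega
        have := val_add_of_lt (neg_ne_zero.mpr h5v) hu2 hcmp
        rw [hx', this.2, val_neg, hval5v]
        exact ⟨v.valuation, rfl⟩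

lemma rep_of_unit {w : ℤ_[2]} (hw : IsUnit w) :
    ∃ a b : ℚ_[2], (w : ℚ_[2]) = a ^ 2 - 5 * b ^ 2 := by
  obtain ⟨c, hc, hdvd⟩ := mod8_cases hw
  have hcodd : ¬ (2:ℤ) ∣ c := by rcases hc with rfl | rfl | rfl | rfl <;> decide
  have hcu : IsUnit (c : ℤ_[2]) := by
    rw [isUnit_iff_not_dvd]
    intro h2
    apply hcodd
    have h2' : ((2:ℕ):ℤ_[2]) ∣ (c:ℤ_[2]) := by exact_mod_cast h2
    have := (PadicInt.norm_int_lt_one_iff_dvd c).mp ((PadicInt.norm_lt_one_iff_dvd _).mpr h2')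
    exact_mod_cast this
  obtain ⟨cu, hcu_eq⟩ := hcu
  have hs1 : (8:ℤ_[2]) ∣ w * ↑cu⁻¹ - 1 := by
    obtain ⟨t, ht⟩ := hdvd
    refine ⟨(↑cu⁻¹ : ℤ_[2]) * t, ?_⟩
    have hinv : (↑cu⁻¹ : ℤ_[2]) * (c:ℤ_[2]) = 1 := by
      rw [← hcu_eq]; exact cu.inv_mul
    calc w * ↑cu⁻¹ - 1 = (↑cu⁻¹ : ℤ_[2]) * (w - (c:ℤ_[2])) + ((↑cu⁻¹ : ℤ_[2]) * (c:ℤ_[2]) - 1) := by ring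
      _ = 8 * ((↑cu⁻¹ : ℤ_[2]) * t) := by rw [ht, hinv]; ring
  obtain ⟨sq, hsq⟩ := exists_sqrt hs1
  have hw_eq : w = (c:ℤ_[2]) * sq ^ 2 := by
    have hinv2 : (c:ℤ_[2]) * (↑cu⁻¹ : ℤ_[2]) = 1 := by
      rw [← hcu_eq]; exact cu.mul_inv
    calc w = w * ((c:ℤ_[2]) * (↑cu⁻¹ : ℤ_[2])) := by rw [hinv2, mul_one]
      _ = (c:ℤ_[2]) * (w * ↑cu⁻¹) := by ring
      _ = (c:ℤ_[2]) * sq ^ 2 := by rw [hsq]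
  obtain ⟨a0, b0, hab⟩ : ∃ a0 b0 : ℤ, c = a0 ^ 2 - 5 * b0 ^ 2 := by
    rcases hc with rfl | rfl | rfl | rfl
    exacts [⟨1, 0, by norm_num⟩, ⟨4, 1, by norm_num⟩, ⟨1, 2, by norm_num⟩, ⟨2, 1, by norm_num⟩]
  refine ⟨(a0:ℚ_[2]) * (sq:ℚ_[2]), (b0:ℚ_[2]) * (sq:ℚ_[2]), ?_⟩
  rw [hab] at hw_eq
  have := congrArg (fun z : ℤ_[2] => (z : ℚ_[2])) hw_eq
  push_cast at this
  rw [show ((5:ℤ_[2]):ℚ_[2]) = ((5:ℕ):ℚ_[2]) from rfl, Nat.cast_ofNat] at this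
  rw [this]
  ring

lemma rep_of_even_val {x : ℚ_[2]} (hx : x ≠ 0) (h : Even x.valuation) :
    ∃ u v : ℚ_[2], x = u ^ 2 - 5 * v ^ 2 := by
  obtain ⟨k, hk⟩ := h
  set g : ℚ_[2] := (2:ℚ_[2]) ^ k with hg
  have hgne : g ≠ 0 := zpow_ne_zero k (by norm_num)
  have hgval : g.valuation = k := val_two_zpow k
  set w : ℚ_[2] := x / g ^ 2 with hw
  have hwne : w ≠ 0 := div_ne_zero hx (pow_ne_zero 2 hgne)
  have hxw : x = g ^ 2 * w := by rw [hw, mul_div_cancel₀ x (pow_ne_zero 2 hgne)]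
  have hg2 : (g ^ 2).valuation = k + k := by
    rw [sq g, Padic.valuation_mul hgne hgne, hgval]
  have hwval : w.valuation = 0 := by
    have := Padic.valuation_mul (pow_ne_zero 2 hgne) hwne
    rw [← hxw, hg2] at this
    omega
  have hwnorm : ‖w‖ = 1 := by
    rw [Padic.norm_eq_zpow_neg_valuation hwne, hwval]; norm_num
  set w' : ℤ_[2] := ⟨w, le_of_eq hwnorm⟩ with hw'
  have hw'unit : IsUnit w' := PadicInt.isUnit_iff.mpr hwnorm
  obtain ⟨a, b, hab⟩ := rep_of_unit hw'unit
  refine ⟨g * a, g * b, ?_⟩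
  have : w = a ^ 2 - 5 * b ^ 2 := hab
  rw [hxw, this]; ring

/-- For T = N(5) ⊆ ℚ₂, the set O₁(T) consists of 0 together with the 2-adic
numbers of positive odd valuation, O₂(T) consists of the nonzero 2-adic
integers of even valuation, and O(T) = O₁(T) ∪ O₂(T) = ℤ₂. -/
theorem stmt_11 :
    let T : Set ℚ_[2] := {x | x ≠ 0 ∧ ∃ u v : ℚ_[2], x = u ^ 2 - 5 * v ^ 2}
    let O1 : Set ℚ_[2] := {x | x ∉ T ∧ 1 + x ∈ T}
    let O2 : Set ℚ_[2] := {x | x ∈ T ∧ ∀ y ∈ O1, x * y ∈ O1}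
    O1 = {x : ℚ_[2] | x = 0 ∨ (0 < x.valuation ∧ Odd x.valuation)} ∧
    O2 = {x : ℚ_[2] | x ≠ 0 ∧ 0 ≤ x.valuation ∧ Even x.valuation} ∧
    O1 ∪ O2 = Set.range ((↑) : ℤ_[2] → ℚ_[2]) := by
  intro T O1 O2
  have hT : ∀ x : ℚ_[2], x ∈ T ↔ (x ≠ 0 ∧ Even x.valuation) := by
    intro x
    constructor
    · rintro ⟨hx, u, v, h⟩; exact ⟨hx, even_val_of_rep hx h⟩
    · rintro ⟨hx, h⟩; exact ⟨hx, rep_of_even_val hx h⟩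
  have h2val : (2:ℚ_[2]).valuation = 1 := by
    have := @Padic.valuation_p 2 ⟨Nat.prime_two⟩
    simpa using this
  have hO1 : O1 = {x : ℚ_[2] | x = 0 ∨ (0 < x.valuation ∧ Odd x.valuation)} := by
    ext x
    simp only [O1, Set.mem_setOf_eq]
    constructor
    · rintro ⟨hnT, hT1⟩
      by_cases hx : x = 0
      · exact Or.inl hx
      right
      have hodd : Odd x.valuation := by
        rcases Int.even_or_odd x.valuation with he | ho
        · exact absurd ((hT x).mpr ⟨hx, he⟩) hnT
        · exact ho
      refine ⟨?_, hodd⟩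
      by_contra hle
      push_neg at hle
      have hne0 : x.valuation ≠ 0 := by
        intro h0
        rw [h0] at hodd
        exact (Int.not_odd_iff_even.mpr Even.zero) hodd
      have hlt : x.valuation < (1:ℚ_[2]).valuation := by
        rw [Padic.valuation_one]; omega
      obtain ⟨hne, hval⟩ := val_add_of_lt hx one_ne_zero hlt
      have h1x := ((hT (1+x)).mp hT1).2
      rw [add_comm, hval] at h1x
      exact (Int.not_odd_iff_even.mpr h1x) hodd
    · rintro (rfl | ⟨hpos, hodd⟩)
      · refine ⟨fun h => h.1 rfl, ?_⟩
        rw [add_zero]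
        exact (hT 1).mpr ⟨one_ne_zero, by rw [Padic.valuation_one]; exact Even.zero⟩
      · have hx : x ≠ 0 := by
          rintro rfl
          rw [Padic.valuation_zero] at hpos
          omega
        refine ⟨fun h => (Int.not_odd_iff_even.mpr ((hT x).mp h).2) hodd, ?_⟩
        have hlt : (1:ℚ_[2]).valuation < x.valuation := by
          rw [Padic.valuation_one]; omega
        obtain ⟨hne, hval⟩ := val_add_of_lt one_ne_zero hx hlt
        exact (hT _).mpr ⟨hne, by rw [hval, Padic.valuation_one]; exact Even.zero⟩
  have hO2 : O2 = {x : ℚ_[2] | x ≠ 0 ∧ 0 ≤ x.valuation ∧ Even x.valuation} := by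
    ext x
    simp only [O2, Set.mem_setOf_eq]
    constructor
    · rintro ⟨hxT, hmul⟩
      obtain ⟨hx, heven⟩ := (hT x).mp hxT
      refine ⟨hx, ?_, heven⟩
      have h2O1 : (2:ℚ_[2]) ∈ O1 := by
        rw [hO1]
        exact Or.inr ⟨by rw [h2val]; norm_num, by rw [h2val]; decide⟩
      have hx2 := hmul 2 h2O1
      rw [hO1] at hx2
      rcases hx2 with h0 | ⟨hpos, -⟩
      · exact absurd h0 (mul_ne_zero hx two_ne_zero)
      · rw [Padic.valuation_mul hx two_ne_zero, h2val] at hpos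
        omega
    · rintro ⟨hx, hnn, heven⟩
      refine ⟨(hT x).mpr ⟨hx, heven⟩, ?_⟩
      intro y hy
      rw [hO1] at hy
      rw [hO1]
      rcases hy with rfl | ⟨hpos, hodd⟩
      · exact Or.inl (mul_zero x)
      · right
        have hy0 : y ≠ 0 := by
          rintro rfl
          rw [Padic.valuation_zero] at hpos
          omega
        rw [Padic.valuation_mul hx hy0]
        exact ⟨by omega, heven.add_odd hodd⟩
  refine ⟨hO1, hO2, ?_⟩
  rw [hO1, hO2]
  ext x
  simp only [Set.mem_union, Set.mem_setOf_eq, Set.mem_range]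
  constructor
  · rintro ((rfl | ⟨hpos, -⟩) | ⟨-, hnn, -⟩)
    · exact ⟨(0:ℤ_[2]), by push_cast; ring⟩
    · refine ⟨⟨x, ?_⟩, rfl⟩
      rw [Padic.norm_le_one_iff_val_nonneg]; omega
    · refine ⟨⟨x, ?_⟩, rfl⟩
      rw [Padic.norm_le_one_iff_val_nonneg]; omega
  · rintro ⟨z, rfl⟩
    have hle : ‖(z:ℚ_[2])‖ ≤ 1 := by
      exact z.prop
    have hnn : 0 ≤ (z:ℚ_[2]).valuation := (Padic.norm_le_one_iff_val_nonneg _).mp hle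
    by_cases h0 : (z:ℚ_[2]) = 0
    · exact Or.inl (Or.inl h0)
    rcases Int.even_or_odd (z:ℚ_[2]).valuation with he | ho
    · exact Or.inr ⟨h0, hnn, he⟩
    · refine Or.inl (Or.inr ⟨?_, ho⟩)
      have : (z:ℚ_[2]).valuation ≠ 0 := by
        intro hv
        rw [hv] at ho
        exact (Int.not_odd_iff_even.mpr Even.zero) ho
      omega
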